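/- Let m ≤ n be positive integers. The sum of det(B·Bᵀ) over all 2^(m·n) matrices B ∈ {+1,-1}^(m×n) equals m! · C(n,m) · 2^(m·n). Equivalently, if B is an m × n {±1}-matrix chosen uniformly at random, then E(det(B·Bᵀ)) = m!·C(n,m). -/

import Mathlib

open Matrix Finset

private lemma aux_sum_bool (P Q : Prop) [Decidable P] [Decidable Q] :
    ∑ c : Bool, ((if P then (if c then (1:ℤ) else -1) else 1) *
      (if Q then (if c then (1:ℤ) else -1) else 1)) = if (P ↔ Q) then 2 else 0 := by
  by_cases hP : P <;> by_cases hQ : Q <;>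
    simp [hP, hQ, Fintype.sum_bool]

private lemma sum_eps (m n : ℕ) (σ : Equiv.Perm (Fin m)) (f : Fin m → Fin n) :
    ∑ ε : Fin m → Fin n → Bool,
      ∏ i, ((if ε (σ i) (f i) then (1:ℤ) else -1) * (if ε i (f i) then (1:ℤ) else -1)) =
    if f ∘ σ = f then 2 ^ (m * n) else 0 := by
  classical
  have key : ∀ ε : Fin m → Fin n → Bool,
      ∏ i, ((if ε (σ i) (f i) then (1:ℤ) else -1) * (if ε i (f i) then (1:ℤ) else -1))
      = ∏ a, ∏ j, ((if f (σ⁻¹ a) = j then (if ε a j then (1:ℤ) else -1) else 1) *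
                   (if f a = j then (if ε a j then (1:ℤ) else -1) else 1)) := by
    intro ε
    rw [Finset.prod_mul_distrib]
    have h1 : ∏ i, (if ε (σ i) (f i) then (1:ℤ) else -1)
        = ∏ a, (if ε a (f (σ⁻¹ a)) then (1:ℤ) else -1) := by
      rw [← Equiv.prod_comp σ (fun a => (if ε a (f (σ⁻¹ a)) then (1:ℤ) else -1))]
      simp
    rw [h1, ← Finset.prod_mul_distrib]
    refine Finset.prod_congr rfl fun a _ => ?_
    rw [Finset.prod_mul_distrib, Fintype.prod_ite_eq, Fintype.prod_ite_eq]
  simp_rw [key]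
  rw [← Fintype.prod_sum (fun a (r : Fin n → Bool) =>
    ∏ j, ((if f (σ⁻¹ a) = j then (if r j then (1:ℤ) else -1) else 1) *
          (if f a = j then (if r j then (1:ℤ) else -1) else 1)))]
  have h2 : ∀ a : Fin m, (∑ r : Fin n → Bool,
      ∏ j, ((if f (σ⁻¹ a) = j then (if r j then (1:ℤ) else -1) else 1) *
            (if f a = j then (if r j then (1:ℤ) else -1) else 1)))
      = ∏ j, (if (f (σ⁻¹ a) = j ↔ f a = j) then (2:ℤ) else 0) := by
    intro a
    rw [← Fintype.prod_sum (fun j (c : Bool) =>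
      ((if f (σ⁻¹ a) = j then (if c then (1:ℤ) else -1) else 1) *
       (if f a = j then (if c then (1:ℤ) else -1) else 1)))]
    exact Finset.prod_congr rfl fun j _ => aux_sum_bool _ _
  simp_rw [h2]
  by_cases hfσ : f ∘ σ = f
  · rw [if_pos hfσ]
    have hinv : ∀ a, f (σ⁻¹ a) = f a := by
      intro a
      conv_rhs => rw [← Equiv.apply_symm_apply σ a]
      exact (congrFun hfσ (σ⁻¹ a)).symm ▸ rfl
    calc ∏ a, ∏ j, (if (f (σ⁻¹ a) = j ↔ f a = j) then (2:ℤ) else 0)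
        = ∏ _a : Fin m, ∏ _j : Fin n, (2:ℤ) := by
          refine Finset.prod_congr rfl fun a _ => Finset.prod_congr rfl fun j _ => ?_
          rw [if_pos (by rw [hinv a])]
      _ = 2 ^ (m * n) := by
          rw [Finset.prod_const, Finset.prod_const, Finset.card_univ, Finset.card_univ,
            Fintype.card_fin, Fintype.card_fin, ← pow_mul, Nat.mul_comm]
  · rw [if_neg hfσ]
    have : ∃ i, f (σ i) ≠ f i := by
      by_contra h
      push_neg at h
      exact hfσ (funext h)
    obtain ⟨i, hi⟩ := this
    refine Finset.prod_eq_zero (Finset.mem_univ (σ i)) ?_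
    refine Finset.prod_eq_zero (Finset.mem_univ (f (σ i))) ?_
    have hc : ¬(f (σ⁻¹ (σ i)) = f (σ i) ↔ f (σ i) = f (σ i)) := by
      simp only [Equiv.Perm.inv_def, Equiv.symm_apply_apply]
      exact fun hiff => hi (hiff.mpr trivial).symm
    rw [if_neg hc]

private lemma sum_sign_stab {m n : ℕ} (f : Fin m → Fin n) :
    ∑ σ : Equiv.Perm (Fin m), (if f ∘ σ = f then ((Equiv.Perm.sign σ : ℤˣ) : ℤ) else 0) =
      if Function.Injective f then 1 else 0 := by
  classical
  by_cases hf : Function.Injective f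
  · rw [if_pos hf, Finset.sum_eq_single 1]
    · simp
    · intro σ _ hσ
      rw [if_neg]
      intro h
      exact hσ (Equiv.ext fun x => hf (congrFun h x))
    · simp
  · rw [if_neg hf]
    obtain ⟨i, j, hfij, hij⟩ := Function.not_injective_iff.mp hf
    have hswap : f ∘ (Equiv.swap i j) = f := by
      funext a
      rcases eq_or_ne a i with rfl | hai
      · simp [Equiv.swap_apply_left, hfij.symm]
      · rcases eq_or_ne a j with rfl | haj
        · simp [Equiv.swap_apply_right, hfij]
        · simp [Equiv.swap_apply_of_ne_of_ne hai haj]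
    have hcond : ∀ σ : Equiv.Perm (Fin m),
        (f ∘ ⇑(σ * Equiv.swap i j) = f) ↔ (f ∘ ⇑σ = f) := by
      intro σ
      constructor
      · intro h
        have : (f ∘ ⇑(σ * Equiv.swap i j)) ∘ ⇑(Equiv.swap i j) = f ∘ ⇑(Equiv.swap i j) := by
          rw [h]
        calc f ∘ ⇑σ = (f ∘ ⇑(σ * Equiv.swap i j)) ∘ ⇑(Equiv.swap i j) := by
              funext a; simp [Equiv.Perm.mul_apply]
          _ = f ∘ ⇑(Equiv.swap i j) := this
          _ = f := hswap
      · intro h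
        calc f ∘ ⇑(σ * Equiv.swap i j) = (f ∘ ⇑σ) ∘ ⇑(Equiv.swap i j) := rfl
          _ = f ∘ ⇑(Equiv.swap i j) := by rw [h]
          _ = f := hswap
    refine Finset.sum_ninvolution (fun σ => σ * Equiv.swap i j) ?_ ?_
      (fun σ => Finset.mem_univ _) ?_
    · intro σ
      by_cases h : f ∘ ⇑σ = f
      · rw [if_pos h, if_pos ((hcond σ).mpr h)]
        rw [Equiv.Perm.sign_mul, Equiv.Perm.sign_swap hij]
        simp
      · rw [if_neg h, if_neg (fun hc => h ((hcond σ).mp hc))]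
        ring
    · intro σ _ h
      have h' : σ * Equiv.swap i j = σ := h
      have h1 : Equiv.swap i j = 1 := by
        apply mul_left_cancel (a := σ)
        rw [mul_one]; exact h'
      have h2 := Equiv.congr_fun h1 i
      simp [Equiv.swap_apply_left] at h2
      exact hij h2.symm
    · intro σ
      show σ * Equiv.swap i j * Equiv.swap i j = σ
      rw [mul_assoc, Equiv.swap_mul_self, mul_one]

private lemma count_injective (m n : ℕ) :
    ∑ f : Fin m → Fin n, (if Function.Injective f then (1:ℤ) else 0)
      = (m.factorial : ℤ) * (n.choose m : ℤ) := by
  classical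
  rw [Finset.sum_boole]
  have h1 : (Finset.univ.filter (fun f : Fin m → Fin n => Function.Injective f)).card
      = Fintype.card (Fin m ↪ Fin n) := by
    rw [← Fintype.card_subtype]
    exact Fintype.card_congr (Equiv.subtypeInjectiveEquivEmbedding (Fin m) (Fin n))
  rw [h1, Fintype.card_embedding_eq, Fintype.card_fin, Fintype.card_fin,
    Nat.descFactorial_eq_factorial_mul_choose]
  push_cast
  ring

theorem sum_det_gram_random_pm_one (m n : ℕ) (hm : 1 ≤ m) (hmn : m ≤ n) :
    ∑ ε : Fin m → Fin n → Bool,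
        ((Matrix.of fun i j => if ε i j then (1 : ℤ) else -1) *
          (Matrix.of fun i j => if ε i j then (1 : ℤ) else -1)ᵀ).det =
      (m.factorial : ℤ) * (n.choose m : ℤ) * 2 ^ (m * n) := by
  classical
  have expand : ∀ ε : Fin m → Fin n → Bool,
      ((Matrix.of fun i j => if ε i j then (1 : ℤ) else -1) *
        (Matrix.of fun i j => if ε i j then (1 : ℤ) else -1)ᵀ).det
      = ∑ σ : Equiv.Perm (Fin m), ∑ f : Fin m → Fin n,
          ((Equiv.Perm.sign σ : ℤˣ) : ℤ) *
            ∏ i, ((if ε (σ i) (f i) then (1:ℤ) else -1) * (if ε i (f i) then (1:ℤ) else -1)) := by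
    intro ε
    rw [Matrix.det_apply']
    refine Finset.sum_congr rfl fun σ _ => ?_
    rw [← Finset.mul_sum]
    congr 1
    rw [← Fintype.prod_sum (fun i (j : Fin n) =>
      (if ε (σ i) j then (1:ℤ) else -1) * (if ε i j then (1:ℤ) else -1))]
    refine Finset.prod_congr rfl fun i _ => ?_
    simp [Matrix.mul_apply]
  calc ∑ ε : Fin m → Fin n → Bool,
        ((Matrix.of fun i j => if ε i j then (1 : ℤ) else -1) *
          (Matrix.of fun i j => if ε i j then (1 : ℤ) else -1)ᵀ).det
      = ∑ ε : Fin m → Fin n → Bool, ∑ σ : Equiv.Perm (Fin m), ∑ f : Fin m → Fin n,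
          ((Equiv.Perm.sign σ : ℤˣ) : ℤ) *
            ∏ i, ((if ε (σ i) (f i) then (1:ℤ) else -1) * (if ε i (f i) then (1:ℤ) else -1)) :=
        Finset.sum_congr rfl fun ε _ => expand ε
    _ = ∑ σ : Equiv.Perm (Fin m), ∑ f : Fin m → Fin n,
          ((Equiv.Perm.sign σ : ℤˣ) : ℤ) *
            ∑ ε : Fin m → Fin n → Bool,
              ∏ i, ((if ε (σ i) (f i) then (1:ℤ) else -1) * (if ε i (f i) then (1:ℤ) else -1)) := by
        rw [Finset.sum_comm]
        refine Finset.sum_congr rfl fun σ _ => ?_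
        rw [Finset.sum_comm]
        exact Finset.sum_congr rfl fun f _ => (Finset.mul_sum _ _ _).symm
    _ = ∑ σ : Equiv.Perm (Fin m), ∑ f : Fin m → Fin n,
          (if f ∘ σ = f then ((Equiv.Perm.sign σ : ℤˣ) : ℤ) else 0) * 2 ^ (m * n) := by
        refine Finset.sum_congr rfl fun σ _ => Finset.sum_congr rfl fun f _ => ?_
        rw [sum_eps m n σ f]
        split_ifs <;> ring
    _ = ∑ f : Fin m → Fin n,
          (∑ σ : Equiv.Perm (Fin m), (if f ∘ σ = f then ((Equiv.Perm.sign σ : ℤˣ) : ℤ) else 0))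
            * 2 ^ (m * n) := by
        rw [Finset.sum_comm]
        exact Finset.sum_congr rfl fun f _ => (Finset.sum_mul _ _ _).symm
    _ = ∑ f : Fin m → Fin n, (if Function.Injective f then (1:ℤ) else 0) * 2 ^ (m * n) := by
        refine Finset.sum_congr rfl fun f _ => ?_
        rw [sum_sign_stab f]
    _ = (m.factorial : ℤ) * (n.choose m : ℤ) * 2 ^ (m * n) := by
        rw [← Finset.sum_mul, count_injective m n]
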